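/- If a two-qubit state ρ is an X state (nonzero entries only on the diagonal and anti-diagonal in the computational basis), then its Bloch vectors a, b both point along the z-axis and its correlation matrix T is block-diagonal with the z-axis an eigen-direction; consequently, when b ≠ 0, the maximal steered coherence equals the larger of the two semiaxis lengths of the steering ellipsoid orthogonal to the z-axis, namely max over unit m of |P_{xy}(Tᵀm)|/|1 + a·m| where P_{xy} projects onto the xy-plane. -/

import Mathlib

open Matrix BigOperators Kronecker ComplexOrder

noncomputable section

def pauli : Fin 3 → Matrix (Fin 2) (Fin 2) ℂ :=
  ![!![0, 1; 1, 0], !![0, -Complex.I; Complex.I, 0], !![1, 0; 0, -1]]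

def cross3 (u v : Fin 3 → ℝ) : Fin 3 → ℝ :=
  ![u 1 * v 2 - u 2 * v 1, u 2 * v 0 - u 0 * v 2, u 0 * v 1 - u 1 * v 0]

def norm3 (v : Fin 3 → ℝ) : ℝ := Real.sqrt (∑ i, v i ^ 2)

def dot3 (u v : Fin 3 → ℝ) : ℝ := ∑ i, u i * v i

lemma cross_z_helper (b : Fin 3 → ℝ) (hb0 : b 0 = 0) (hb1 : b 1 = 0) (hb2 : b 2 ≠ 0)
    (u : Fin 3 → ℝ) :
    norm3 (cross3 u (fun i => b i / norm3 b)) = Real.sqrt (u 0 ^ 2 + u 1 ^ 2) := by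
  have hnb : norm3 b = |b 2| := by
    simp [norm3, Fin.sum_univ_three, hb0, hb1, Real.sqrt_sq_eq_abs]
  have hs : (b 2 / norm3 b) ^ 2 = 1 := by
    rw [hnb, div_pow, sq_abs, div_self (by positivity)]
  generalize hsv : b 2 / norm3 b = s at hs
  have hv : (fun i => b i / norm3 b) = ![0, 0, s] := by
    funext i
    fin_cases i <;> simp [hb0, hb1, hsv]
  rw [hv]
  have h1 : (u 1 * s) ^ 2 = u 1 ^ 2 := by rw [mul_pow, hs, mul_one]
  have h0 : (-(u 0 * s)) ^ 2 = u 0 ^ 2 := by rw [neg_pow, mul_pow, hs]; ring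
  simp only [norm3, cross3, Fin.sum_univ_three, Matrix.cons_val_zero, Matrix.cons_val_one,
    Matrix.head_cons, Matrix.cons_val_two, Matrix.tail_cons, mul_zero, sub_zero, zero_sub,
    zero_mul, mul_one]
  rw [h1, h0]
  norm_num [add_comm]

/-- for an X state, both Bloch vectors point along the z-axis, T is
block diagonal with the z-axis an eigen-direction, and (when b ≠ 0) the maximal
steered coherence equals the maximum of the xy-plane projection of Tᵀm over unit
vectors m (normalized by |1 + a·m|). -/
theorem stmt15 (ρ : Matrix (Fin 2 × Fin 2) (Fin 2 × Fin 2) ℂ)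
    (hherm : ρ.IsHermitian) (hpsd : ρ.PosSemidef) (htr : ρ.trace = 1)
    (hX : ∀ x y : Fin 2 × Fin 2, ρ x y ≠ 0 → x = y ∨ (x.1 ≠ y.1 ∧ x.2 ≠ y.2))
    (a b : Fin 3 → ℝ) (T : Matrix (Fin 3) (Fin 3) ℝ)
    (ha : ∀ i, a i = ((ρ * (pauli i ⊗ₖ 1)).trace).re)
    (hb : ∀ j, b j = ((ρ * ((1 : Matrix (Fin 2) (Fin 2) ℂ) ⊗ₖ pauli j)).trace).re)
    (hT : ∀ i j, T i j = ((ρ * (pauli i ⊗ₖ pauli j)).trace).re)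
    (hbne : b ≠ 0) :
    a 0 = 0 ∧ a 1 = 0 ∧ b 0 = 0 ∧ b 1 = 0 ∧
    T 0 2 = 0 ∧ T 1 2 = 0 ∧ T 2 0 = 0 ∧ T 2 1 = 0 ∧
    sSup {c | ∃ m : Fin 3 → ℝ, norm3 m = 1 ∧
        c = norm3 (cross3 (fun j => ∑ i, T i j * m i) (fun i => b i / norm3 b)) /
          |1 + dot3 a m|} =
      sSup {c | ∃ m : Fin 3 → ℝ, norm3 m = 1 ∧
        c = Real.sqrt ((∑ i, T i 0 * m i) ^ 2 + (∑ i, T i 1 * m i) ^ 2) /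
          |1 + dot3 a m|} := by
  have hz : ∀ x y : Fin 2 × Fin 2, x ≠ y → (x.1 = y.1 ∨ x.2 = y.2) → ρ x y = 0 := by
    intro x y h1 h2
    by_contra h
    rcases hX x y h with h' | ⟨h1', h2'⟩
    · exact h1 h'
    · rcases h2 with h2 | h2 <;> tauto
  have z1 : ρ (0,0) (0,1) = 0 := hz 0 (0,1) (by decide) (by left; rfl)
  have z2 : ρ (0,0) (1,0) = 0 := hz 0 (1,0) (by decide) (by right; rfl)
  have z3 : ρ (0,1) (0,0) = 0 := hz (0,1) 0 (by decide) (by left; rfl)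
  have z4 : ρ (0,1) (1,1) = 0 := hz (0,1) 1 (by decide) (by right; rfl)
  have z5 : ρ (1,0) (0,0) = 0 := hz (1,0) 0 (by decide) (by right; rfl)
  have z6 : ρ (1,0) (1,1) = 0 := hz (1,0) 1 (by decide) (by left; rfl)
  have z7 : ρ (1,1) (0,1) = 0 := hz 1 (0,1) (by decide) (by right; rfl)
  have z8 : ρ (1,1) (1,0) = 0 := hz 1 (1,0) (by decide) (by left; rfl)
  have ha0 : a 0 = 0 := by
    rw [ha]
    simp only [Matrix.trace, Matrix.diag, Matrix.mul_apply, Fintype.sum_prod_type,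
      Fin.sum_univ_two, Matrix.kroneckerMap_apply, pauli, Matrix.one_apply]
    norm_num [Matrix.cons_val_zero, Matrix.cons_val_one, Matrix.cons_val, Matrix.cons_val_two, Matrix.tail_cons, Matrix.head_cons, z1, z2, z3, z4, z5, z6, z7, z8]
  have ha1 : a 1 = 0 := by
    rw [ha]
    simp only [Matrix.trace, Matrix.diag, Matrix.mul_apply, Fintype.sum_prod_type,
      Fin.sum_univ_two, Matrix.kroneckerMap_apply, pauli, Matrix.one_apply]
    norm_num [Matrix.cons_val_zero, Matrix.cons_val_one, Matrix.cons_val, Matrix.cons_val_two, Matrix.tail_cons, Matrix.head_cons, z1, z2, z3, z4, z5, z6, z7, z8]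
  have hb0 : b 0 = 0 := by
    rw [hb]
    simp only [Matrix.trace, Matrix.diag, Matrix.mul_apply, Fintype.sum_prod_type,
      Fin.sum_univ_two, Matrix.kroneckerMap_apply, pauli, Matrix.one_apply]
    norm_num [Matrix.cons_val_zero, Matrix.cons_val_one, Matrix.cons_val, Matrix.cons_val_two, Matrix.tail_cons, Matrix.head_cons, z1, z2, z3, z4, z5, z6, z7, z8]
  have hb1 : b 1 = 0 := by
    rw [hb]
    simp only [Matrix.trace, Matrix.diag, Matrix.mul_apply, Fintype.sum_prod_type,
      Fin.sum_univ_two, Matrix.kroneckerMap_apply, pauli, Matrix.one_apply]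
    norm_num [Matrix.cons_val_zero, Matrix.cons_val_one, Matrix.cons_val, Matrix.cons_val_two, Matrix.tail_cons, Matrix.head_cons, z1, z2, z3, z4, z5, z6, z7, z8]
  have hT02 : T 0 2 = 0 := by
    rw [hT]
    simp only [Matrix.trace, Matrix.diag, Matrix.mul_apply, Fintype.sum_prod_type,
      Fin.sum_univ_two, Matrix.kroneckerMap_apply, pauli, Matrix.one_apply]
    norm_num [Matrix.cons_val_zero, Matrix.cons_val_one, Matrix.cons_val, Matrix.cons_val_two, Matrix.tail_cons, Matrix.head_cons, z1, z2, z3, z4, z5, z6, z7, z8]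
  have hT12 : T 1 2 = 0 := by
    rw [hT]
    simp only [Matrix.trace, Matrix.diag, Matrix.mul_apply, Fintype.sum_prod_type,
      Fin.sum_univ_two, Matrix.kroneckerMap_apply, pauli, Matrix.one_apply]
    norm_num [Matrix.cons_val_zero, Matrix.cons_val_one, Matrix.cons_val, Matrix.cons_val_two, Matrix.tail_cons, Matrix.head_cons, z1, z2, z3, z4, z5, z6, z7, z8]
  have hT20 : T 2 0 = 0 := by
    rw [hT]
    simp only [Matrix.trace, Matrix.diag, Matrix.mul_apply, Fintype.sum_prod_type,
      Fin.sum_univ_two, Matrix.kroneckerMap_apply, pauli, Matrix.one_apply]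
    norm_num [Matrix.cons_val_zero, Matrix.cons_val_one, Matrix.cons_val, Matrix.cons_val_two, Matrix.tail_cons, Matrix.head_cons, z1, z2, z3, z4, z5, z6, z7, z8]
  have hT21 : T 2 1 = 0 := by
    rw [hT]
    simp only [Matrix.trace, Matrix.diag, Matrix.mul_apply, Fintype.sum_prod_type,
      Fin.sum_univ_two, Matrix.kroneckerMap_apply, pauli, Matrix.one_apply]
    norm_num [Matrix.cons_val_zero, Matrix.cons_val_one, Matrix.cons_val, Matrix.cons_val_two, Matrix.tail_cons, Matrix.head_cons, z1, z2, z3, z4, z5, z6, z7, z8]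
  have hb2 : b 2 ≠ 0 := by
    intro h
    apply hbne
    funext i
    fin_cases i <;> simp [hb0, hb1, h]
  refine ⟨ha0, ha1, hb0, hb1, hT02, hT12, hT20, hT21, ?_⟩
  congr 1
  ext c
  simp only [Set.mem_setOf_eq]
  constructor
  · rintro ⟨m, hm, rfl⟩
    exact ⟨m, hm, by rw [cross_z_helper b hb0 hb1 hb2]⟩
  · rintro ⟨m, hm, rfl⟩
    exact ⟨m, hm, by rw [cross_z_helper b hb0 hb1 hb2]⟩
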